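/- Let n ≥ 2, let a < 0 be a real number, and let P be a real polynomial in the n+1 variables X₀, …, Xₙ (an element of MvPolynomial (Fin (n+1)) ℝ). If P(x) = 0 for every point x ∈ ℝ^{n+1} satisfying −x₀² + x₁² + ⋯ + xₙ² = a and x₀ > 0 (that is, P vanishes on one sheet of the two-sheeted Lorentzian pseudosphere), then the polynomial −X₀² + X₁² + ⋯ + Xₙ² − a divides P in the polynomial ring MvPolynomial (Fin (n+1)) ℝ. -/

import Mathlib

section Aux

open Polynomial

private lemma squarefree_X_sq_add_C' {K : Type*} [Field K] [CharZero K] {u : K} (hu : u ≠ 0) :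
    Squarefree (X ^ 2 + C u : K[X]) := by
  apply Polynomial.Separable.squarefree
  have hd : derivative (X ^ 2 + C u : K[X]) = C 2 * X := by
    simp [derivative_X_pow]; rw [one_add_one_eq_two, map_ofNat]
  rw [Polynomial.Separable, hd]
  refine ⟨C u⁻¹, -(C (2⁻¹ * u⁻¹)) * X, ?_⟩
  have h1 : (C u⁻¹ : K[X]) * C u = 1 := by
    rw [← C_mul, inv_mul_cancel₀ hu, C_1]
  have h2 : (C (2⁻¹ * u⁻¹) : K[X]) * C 2 = C u⁻¹ := by
    rw [← C_mul]; congr 1; field_simp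
  calc C u⁻¹ * (X ^ 2 + C u) + -(C (2⁻¹ * u⁻¹)) * X * (C 2 * X)
      = C u⁻¹ * X ^ 2 + C u⁻¹ * C u - (C (2⁻¹ * u⁻¹) * C 2) * X ^ 2 := by ring
    _ = 1 := by rw [h1, h2]; ring

private lemma descent_aux' {K : Type*} [Field K] {q : K[X]} (hq : Squarefree q)
    (hdeg : 0 < q.natDegree) :
    ∀ N (b c : K[X]), b.natDegree < N → b ^ 2 * q = c ^ 2 → b = 0 := by
  intro N
  induction N with
  | zero => intro b c h; omega
  | succ N ih =>
    intro b c hN h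
    by_contra hb
    have hq0 : q ≠ 0 := hq.ne_zero
    have hqc : q ∣ c := hq.isRadical 2 c ⟨b ^ 2, by rw [← h]; ring⟩
    obtain ⟨d, rfl⟩ := hqc
    have h2 : b ^ 2 = q * d ^ 2 := by
      have h1 : b ^ 2 * q = (q * d ^ 2) * q := by rw [h]; ring
      exact mul_right_cancel₀ hq0 h1
    have hqb : q ∣ b := hq.isRadical 2 b ⟨d ^ 2, h2⟩
    obtain ⟨e, rfl⟩ := hqb
    have he : e ≠ 0 := fun h0 => hb (by simp [h0])
    have h3 : e ^ 2 * q = d ^ 2 := by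
      have h4 : (e ^ 2 * q) * (q * q) = (d ^ 2) * (q * q) := by
        calc (e ^ 2 * q) * (q * q) = (q * e) ^ 2 * q := by ring
          _ = q * d ^ 2 * q := by rw [h2]
          _ = d ^ 2 * (q * q) := by ring
      exact mul_right_cancel₀ (mul_ne_zero hq0 hq0) h4
    have hlt : e.natDegree < N := by
      have hb2 : (q * e).natDegree = q.natDegree + e.natDegree :=
        Polynomial.natDegree_mul hq0 he
      omega
    exact he (ih e d hlt h3)

end Aux

open MvPolynomial

private lemma finSuccEquiv_C'' {m : ℕ} (a : ℝ) :
    finSuccEquiv ℝ m (C a) = Polynomial.C (C a) := by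
  simp [finSuccEquiv_apply]

private lemma finSuccEquiv_sum_sq {m : ℕ} (a : ℝ) :
    finSuccEquiv ℝ m ((∑ i : Fin (m + 1), X i ^ 2) - C a)
      = Polynomial.X ^ 2 + Polynomial.C ((∑ i : Fin m, X i ^ 2) - C a) := by
  rw [map_sub, Fin.sum_univ_succ, map_add, map_pow, finSuccEquiv_X_zero, map_sum,
    finSuccEquiv_C'']
  simp only [map_pow, finSuccEquiv_X_succ]
  rw [map_sub, map_sum]
  simp only [map_pow]
  ring

private lemma b_eq_zero {k : ℕ} {a : ℝ} (ha : a ≠ 0) (b c : MvPolynomial (Fin (k + 1)) ℝ)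
    (h : b ^ 2 * ((∑ i : Fin (k + 1), X i ^ 2) - C a) = c ^ 2) : b = 0 := by
  set A := MvPolynomial (Fin k) ℝ with hA_def
  set K := FractionRing A with hK_def
  have hinj : Function.Injective (algebraMap A K) := IsFractionRing.injective A K
  haveI : CharZero K := charZero_of_injective_algebraMap hinj
  set ψ : MvPolynomial (Fin (k + 1)) ℝ →+* Polynomial K :=
    (Polynomial.mapRingHom (algebraMap A K)).comp
      ((finSuccEquiv ℝ k :
        MvPolynomial (Fin (k + 1)) ℝ ≃ₐ[ℝ] Polynomial A) :
        MvPolynomial (Fin (k + 1)) ℝ →+* Polynomial A) with hψ_def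
  have hψcoe : ⇑ψ = (Polynomial.map (algebraMap A K)) ∘ ⇑(finSuccEquiv ℝ k) := by
    rw [hψ_def]; rfl
  have hψinj : Function.Injective ψ := by
    rw [hψcoe]
    exact (Polynomial.map_injective _ hinj).comp (finSuccEquiv ℝ k).injective
  set u : A := (∑ i : Fin k, X i ^ 2) - C a with hu_def
  have hu : u ≠ 0 := by
    intro h0
    have h7 := congrArg (eval (fun _ : Fin k => (0 : ℝ))) h0
    simp [hu_def] at h7
    exact ha h7
  have hubar : algebraMap A K u ≠ 0 := fun h0 => hu (hinj (by simpa using h0))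
  have hψq : ψ ((∑ i : Fin (k + 1), X i ^ 2) - C a)
      = Polynomial.X ^ 2 + Polynomial.C (algebraMap A K u) := by
    rw [hψcoe, Function.comp_apply, finSuccEquiv_sum_sq, Polynomial.map_add,
      Polynomial.map_pow, Polynomial.map_X, Polynomial.map_C, hu_def]
  have hid : (ψ b) ^ 2 * (Polynomial.X ^ 2 + Polynomial.C (algebraMap A K u))
      = (ψ c) ^ 2 := by
    rw [← hψq, ← map_pow, ← map_pow, ← map_mul, h]
  have hsf : Squarefree (Polynomial.X ^ 2 + Polynomial.C (algebraMap A K u)) :=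
    squarefree_X_sq_add_C' hubar
  have hdeg : 0 < (Polynomial.X ^ 2 + Polynomial.C (algebraMap A K u)).natDegree := by
    rw [Polynomial.natDegree_X_pow_add_C]; norm_num
  have h8 := descent_aux' hsf hdeg ((ψ b).natDegree + 1) (ψ b) (ψ c)
    (Nat.lt_succ_self _) hid
  exact hψinj (by simpa using h8)

/-- A real polynomial in `n+1 ≥ 3` variables vanishing on one sheet
(`x₀ > 0`) of the Lorentzian pseudosphere `−x₀² + x₁² + ⋯ + xₙ² = a` (with `a < 0`)
is divisible by `−X₀² + X₁² + ⋯ + Xₙ² − a`. -/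
theorem vanishing_on_pseudosphere_sheet_divisible (n : ℕ) (hn : 2 ≤ n) (a : ℝ) (ha : a < 0)
    (P : MvPolynomial (Fin (n + 1)) ℝ)
    (hvan : ∀ x : Fin (n + 1) → ℝ,
      (-(x 0 ^ 2) + ∑ i : Fin n, x i.succ ^ 2) = a → 0 < x 0 → eval x P = 0) :
    ((-((X 0 : MvPolynomial (Fin (n + 1)) ℝ) ^ 2)
        + ∑ i : Fin n, (X i.succ : MvPolynomial (Fin (n + 1)) ℝ) ^ 2) - C a) ∣ P := by
  obtain ⟨k, rfl⟩ : ∃ k, n = k + 1 := ⟨n - 1, by omega⟩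
  clear hn
  set q : MvPolynomial (Fin (k + 1)) ℝ := (∑ i : Fin (k + 1), X i ^ 2) - C a with hq_def
  set F : Polynomial (MvPolynomial (Fin (k + 1)) ℝ) := finSuccEquiv ℝ (k + 1) P with hF_def
  set M : Polynomial (MvPolynomial (Fin (k + 1)) ℝ) :=
    Polynomial.X ^ 2 - Polynomial.C q with hM_def
  have hM : M.Monic := Polynomial.monic_X_pow_sub_C q two_ne_zero
  have hdegM : M.degree = 2 := Polynomial.degree_X_pow_sub_C (by norm_num) q
  set R0 : Polynomial (MvPolynomial (Fin (k + 1)) ℝ) := F %ₘ M with hR0_def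
  set b : MvPolynomial (Fin (k + 1)) ℝ := R0.coeff 1 with hb_def
  set c : MvPolynomial (Fin (k + 1)) ℝ := R0.coeff 0 with hc_def
  have hRdeg : R0.degree ≤ 1 := by
    have hlt : R0.degree < 2 := hdegM ▸ Polynomial.degree_modByMonic_lt F hM
    rcases hd : R0.degree with _ | m
    · exact bot_le
    · rw [hd] at hlt
      rw [show (some m : WithBot ℕ) = (m : WithBot ℕ) from rfl] at hlt ⊢
      have hm : m < 2 := by exact_mod_cast hlt
      have h1 : m ≤ 1 := by omega
      exact_mod_cast h1
  have hR0 : R0 = Polynomial.C b * Polynomial.X + Polynomial.C c :=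
    Polynomial.eq_X_add_C_of_degree_le_one hRdeg
  -- pointwise identity coming from the vanishing hypothesis
  have key : ∀ x' : Fin (k + 1) → ℝ, eval x' (b ^ 2 * q) = eval x' (c ^ 2) := by
    intro x'
    have hevq : eval x' q = (∑ i : Fin (k + 1), x' i ^ 2) - a := by
      simp [hq_def]
    have hqpos : 0 < eval x' q := by
      rw [hevq]
      have : (0 : ℝ) ≤ ∑ i : Fin (k + 1), x' i ^ 2 :=
        Finset.sum_nonneg fun i _ => sq_nonneg _
      linarith
    set y := Real.sqrt (eval x' q) with hy
    have hy2 : y ^ 2 = eval x' q := Real.sq_sqrt hqpos.le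
    have hypos : 0 < y := Real.sqrt_pos.2 hqpos
    have h0 := hvan (Fin.cons y x')
      (by simp only [Fin.cons_zero, Fin.cons_succ]; rw [hy2, hevq]; ring)
      (by simpa using hypos)
    rw [eval_eq_eval_mv_eval'] at h0
    rw [← hF_def] at h0
    have hFMR : F = M * (F /ₘ M) + R0 := by
      rw [hR0_def]
      have h5 := Polynomial.modByMonic_add_div F M
      linear_combination -h5
    have hMy : Polynomial.eval y (Polynomial.map (eval x') M) = 0 := by
      simp [hM_def, hy2]
    have hRy : Polynomial.eval y (Polynomial.map (eval x') R0) = 0 := by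
      rw [hFMR, Polynomial.map_add, Polynomial.map_mul, Polynomial.eval_add,
        Polynomial.eval_mul, hMy, zero_mul, zero_add] at h0
      exact h0
    have hbc : eval x' b * y + eval x' c = 0 := by
      rw [hR0] at hRy
      simpa using hRy
    have hsq : (eval x' b * y) ^ 2 = eval x' c ^ 2 := by
      have h6 : eval x' b * y = -eval x' c := by linarith
      rw [h6]; ring
    calc eval x' (b ^ 2 * q) = (eval x' b) ^ 2 * eval x' q := by simp
      _ = (eval x' b * y) ^ 2 := by rw [← hy2]; ring
      _ = eval x' c ^ 2 := hsq
      _ = eval x' (c ^ 2) := by simp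
  have hpoly : b ^ 2 * q = c ^ 2 := MvPolynomial.funext key
  have hb0 : b = 0 := b_eq_zero (ne_of_lt ha) b c (by rw [← hq_def]; exact hpoly)
  have hc0 : c = 0 := by
    have h9 : c ^ 2 = 0 := by rw [← hpoly, hb0]; ring
    exact pow_eq_zero_iff (two_ne_zero) |>.mp h9
  have hR0z : R0 = 0 := by rw [hR0, hb0, hc0]; simp
  have hMF : M ∣ F := by
    refine ⟨F /ₘ M, ?_⟩
    have h10 := Polynomial.modByMonic_add_div F M
    rw [← hR0_def, hR0z, zero_add] at h10
    exact h10.symm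
  have hQ : finSuccEquiv ℝ (k + 1)
      ((-((X 0 : MvPolynomial (Fin (k + 1 + 1)) ℝ) ^ 2)
        + ∑ i : Fin (k + 1), (X i.succ : MvPolynomial (Fin (k + 1 + 1)) ℝ) ^ 2) - C a)
      = -M := by
    rw [map_sub, map_add, map_neg, map_pow, finSuccEquiv_X_zero, map_sum, finSuccEquiv_C'']
    simp only [map_pow, finSuccEquiv_X_succ]
    rw [hM_def, hq_def, map_sub, map_sum]
    simp only [map_pow]
    ring
  have h11 : finSuccEquiv ℝ (k + 1)
      ((-((X 0 : MvPolynomial (Fin (k + 1 + 1)) ℝ) ^ 2)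
        + ∑ i : Fin (k + 1), (X i.succ : MvPolynomial (Fin (k + 1 + 1)) ℝ) ^ 2) - C a)
      ∣ finSuccEquiv ℝ (k + 1) P := by
    rw [hQ, ← hF_def]
    exact (neg_dvd).mpr hMF
  have h12 := map_dvd (finSuccEquiv ℝ (k + 1)).symm h11
  simpa using h12
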